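/- (Deterministic sandwich bound from the proof of Lemma diag) Let Σ be a p×p positive definite matrix, let U ∈ ℝ^{p×n} with UᵀU = I_n (n ≤ p), and let v ∈ ℝ^p with ‖v‖ = 1. Set w = Σ^{1/2}v/‖Σ^{1/2}v‖. Then (λ_min(Σ)/λ_max(Σ))·‖Uᵀw‖² ≤ vᵀ Σ^{1/2} U (Uᵀ Σ U)⁻¹ Uᵀ Σ^{1/2} v ≤ (λ_max(Σ)/λ_min(Σ))·‖Uᵀw‖². -/

import Mathlib

open MeasureTheory ProbabilityTheory Matrix Filter Asymptotics

noncomputable section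

/-- The four Penrose conditions for `B` to be the Moore–Penrose inverse of `A`. -/
def IsMoorePenrose {m n : Type*} [Fintype m] [Fintype n]
    (A : Matrix m n ℝ) (B : Matrix n m ℝ) : Prop :=
  A * B * A = A ∧ B * A * B = B ∧ (A * B)ᵀ = A * B ∧ (B * A)ᵀ = B * A

/-- Smallest (real) eigenvalue of a square matrix. -/
def lambdaMin {k : Type*} [Fintype k] (A : Matrix k k ℝ) : ℝ :=
  sInf {r : ℝ | ∃ v : k → ℝ, v ≠ 0 ∧ A.mulVec v = r • v}

/-- Largest (real) eigenvalue of a square matrix. -/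
def lambdaMax {k : Type*} [Fintype k] (A : Matrix k k ℝ) : ℝ :=
  sSup {r : ℝ | ∃ v : k → ℝ, v ≠ 0 ∧ A.mulVec v = r • v}

/-- Condition number `λ_max / λ_min`. -/
def condNum {k : Type*} [Fintype k] (A : Matrix k k ℝ) : ℝ := lambdaMax A / lambdaMin A

/-- Indices of the conditioning set `C = {1, …, t_c}`. -/
abbrev Cset (p tc : ℕ) := {j : Fin p // (j : ℕ) < tc}

/-- Indices of the remaining set `D = {1, …, p} \ C`. -/
abbrev Dset (p tc : ℕ) := {j : Fin p // tc ≤ (j : ℕ)}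

/-- Column submatrix corresponding to the conditioning set `C`. -/
def colsC {n p : ℕ} (tc : ℕ) (X : Matrix (Fin n) (Fin p) ℝ) : Matrix (Fin n) (Cset p tc) ℝ :=
  fun i j => X i j.1

/-- Column submatrix corresponding to the remaining set `D`. -/
def colsD {n p : ℕ} (tc : ℕ) (X : Matrix (Fin n) (Fin p) ℝ) : Matrix (Fin n) (Dset p tc) ℝ :=
  fun i j => X i j.1

/-- Block `Σ₁₁` of a covariance matrix. -/
def block11 {p : ℕ} (tc : ℕ) (S : Matrix (Fin p) (Fin p) ℝ) : Matrix (Cset p tc) (Cset p tc) ℝ :=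
  fun i j => S i.1 j.1

/-- Block `Σ₁₂`. -/
def block12 {p : ℕ} (tc : ℕ) (S : Matrix (Fin p) (Fin p) ℝ) : Matrix (Cset p tc) (Dset p tc) ℝ :=
  fun i j => S i.1 j.1

/-- Block `Σ₂₁`. -/
def block21 {p : ℕ} (tc : ℕ) (S : Matrix (Fin p) (Fin p) ℝ) : Matrix (Dset p tc) (Cset p tc) ℝ :=
  fun i j => S i.1 j.1

/-- Block `Σ₂₂`. -/
def block22 {p : ℕ} (tc : ℕ) (S : Matrix (Fin p) (Fin p) ℝ) : Matrix (Dset p tc) (Dset p tc) ℝ :=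
  fun i j => S i.1 j.1

/-- Schur complement `Σ₂₂·₂ = Σ₂₂ − Σ₂₁ Σ₁₁⁻¹ Σ₁₂`. -/
def schurCompl {p : ℕ} (tc : ℕ) (S : Matrix (Fin p) (Fin p) ℝ) :
    Matrix (Dset p tc) (Dset p tc) ℝ :=
  block22 tc S - block21 tc S * (block11 tc S)⁻¹ * block12 tc S

/-- Orthogonal projection `M_C = I − X_C (X_Cᵀ X_C)⁻¹ X_Cᵀ`. -/
def projC {n p : ℕ} (tc : ℕ) (X : Matrix (Fin n) (Fin p) ℝ) : Matrix (Fin n) (Fin n) ℝ :=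
  1 - colsC tc X * ((colsC tc X)ᵀ * colsC tc X)⁻¹ * (colsC tc X)ᵀ

/-- A measure on `ℝ` is centered sub-Gaussian with variance `σ²`. -/
def IsCenteredSubGaussian (ν : Measure ℝ) (σ : ℝ) : Prop :=
  (∫ x, x ∂ν) = 0 ∧ (∫ x, x ^ 2 ∂ν) = σ ^ 2 ∧
    ∃ K > 0, ∀ t : ℝ, (∫ x, Real.exp (t * x) ∂ν) ≤ Real.exp (K * t ^ 2)

/-- Euclidean norm of a vector. -/
def vnorm {k : Type*} [Fintype k] (v : k → ℝ) : ℝ := Real.sqrt (v ⬝ᵥ v)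




section Aux
open Matrix

lemma spec_bound {k : Type*} [Fintype k] [DecidableEq k] {M : Matrix k k ℝ} (hM : M.IsHermitian)
    {a b : ℝ} (h : ∀ r : ℝ, (∃ w : k → ℝ, w ≠ 0 ∧ M.mulVec w = r • w) → a ≤ r ∧ r ≤ b)
    (y : k → ℝ) : a * (y ⬝ᵥ y) ≤ y ⬝ᵥ M.mulVec y ∧ y ⬝ᵥ M.mulVec y ≤ b * (y ⬝ᵥ y) := by
  have heig : ∀ i, a ≤ hM.eigenvalues i ∧ hM.eigenvalues i ≤ b := fun i =>
    h _ ⟨_, (by simpa using hM.eigenvectorBasis.orthonormal.ne_zero i),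
      hM.mulVec_eigenvectorBasis i⟩
  set V : Matrix k k ℝ := (hM.eigenvectorUnitary : Matrix k k ℝ) with hV
  set x : k → ℝ := star V *ᵥ y with hx
  have hMy : y ⬝ᵥ M.mulVec y = ∑ i, hM.eigenvalues i * (x i)^2 := by
    conv_lhs => rw [hM.spectral_theorem]
    rw [Unitary.conjStarAlgAut_apply, ← mulVec_mulVec, ← mulVec_mulVec, dotProduct_mulVec,
      ← mulVec_transpose]
    have : Vᵀ = star V := by
      simp [hV, star, conjTranspose, Matrix.map_id']
    rw [this, ← hx]
    simp [mulVec_diagonal, dotProduct, Function.comp]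
    ring_nf
    exact Finset.sum_congr rfl fun i _ => by ring
  have hyy : y ⬝ᵥ y = ∑ i, (x i)^2 := by
    have h1 : x ⬝ᵥ x = y ⬝ᵥ y := by
      rw [hx, dotProduct_mulVec, ← mulVec_transpose]
      have : (star V)ᵀ = V := by
        simp [star, conjTranspose, Matrix.map_id']
      rw [this, mulVec_mulVec, (Matrix.mem_unitaryGroup_iff).mp hM.eigenvectorUnitary.2,
        one_mulVec]
    rw [← h1]
    simp [dotProduct, sq]
  constructor
  · rw [hMy, hyy, Finset.mul_sum]
    exact Finset.sum_le_sum fun i _ => mul_le_mul_of_nonneg_right (heig i).1 (sq_nonneg _)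
  · rw [hMy, hyy, Finset.mul_sum]
    exact Finset.sum_le_sum fun i _ => mul_le_mul_of_nonneg_right (heig i).2 (sq_nonneg _)

lemma eig_set_eq {k : Type*} [Fintype k] [DecidableEq k] {M : Matrix k k ℝ}
    (hM : M.IsHermitian) :
    {r : ℝ | ∃ w : k → ℝ, w ≠ 0 ∧ M.mulVec w = r • w} = Set.range hM.eigenvalues := by
  ext r
  constructor
  · rintro ⟨w, hw, hMw⟩
    set V : Matrix k k ℝ := (hM.eigenvectorUnitary : Matrix k k ℝ) with hV
    set x : k → ℝ := star V *ᵥ w with hx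
    have hVx : V *ᵥ x = w := by
      rw [hx, mulVec_mulVec, (Matrix.mem_unitaryGroup_iff).mp hM.eigenvectorUnitary.2,
        one_mulVec]
    have hxne : x ≠ 0 := by
      intro h0
      exact hw (by rw [← hVx, h0, mulVec_zero])
    have h2 : star V * M = diagonal (RCLike.ofReal ∘ hM.eigenvalues) * star V := by
      conv_lhs => rw [hM.spectral_theorem]
      rw [Unitary.conjStarAlgAut_apply, ← mul_assoc, ← mul_assoc, (Matrix.mem_unitaryGroup_iff').mp hM.eigenvectorUnitary.2,
        one_mul]
    have hDx : diagonal (RCLike.ofReal ∘ hM.eigenvalues) *ᵥ x = r • x := by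
      rw [hx, mulVec_mulVec, ← h2, ← mulVec_mulVec, hMw, mulVec_smul]
    obtain ⟨i, hi⟩ := Function.ne_iff.mp hxne
    have hthis := congrFun hDx i
    rw [mulVec_diagonal] at hthis
    simp only [Function.comp_apply, RCLike.ofReal_real_eq_id, id_eq, Pi.smul_apply,
      smul_eq_mul] at hthis
    exact ⟨i, mul_right_cancel₀ hi (by simpa using hthis)⟩
  · rintro ⟨i, rfl⟩
    exact ⟨_, (by simpa using hM.eigenvectorBasis.orthonormal.ne_zero i),
      hM.mulVec_eigenvectorBasis i⟩

lemma dot_self_nonneg {k : Type*} [Fintype k] (y : k → ℝ) : 0 ≤ y ⬝ᵥ y :=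
  Finset.sum_nonneg fun i _ => mul_self_nonneg (y i)

lemma dot_self_pos {k : Type*} [Fintype k] {y : k → ℝ} (hy : y ≠ 0) : 0 < y ⬝ᵥ y :=
  lt_of_le_of_ne (dot_self_nonneg y) (Ne.symm (fun h => hy (dotProduct_self_eq_zero.mp h)))

lemma sandwich_arith {a b c2 uu Q : ℝ} (ha : 0 < a) (hb : 0 < b) (hc2a : a ≤ c2)
    (hc2b : c2 ≤ b) (huu : 0 ≤ uu) (hQl : b⁻¹ * uu ≤ Q) (hQu : Q ≤ a⁻¹ * uu) :
    (a / b) * (uu / c2) ≤ Q ∧ Q ≤ (b / a) * (uu / c2) := by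
  have hc2 : 0 < c2 := lt_of_lt_of_le ha hc2a
  constructor
  · calc (a / b) * (uu / c2) = (a / c2) * (uu / b) := by ring
      _ ≤ 1 * (uu / b) :=
        mul_le_mul_of_nonneg_right ((div_le_one hc2).mpr hc2a) (div_nonneg huu hb.le)
      _ = b⁻¹ * uu := by rw [one_mul, div_eq_inv_mul]
      _ ≤ Q := hQl
  · calc Q ≤ a⁻¹ * uu := hQu
      _ = 1 * (uu / a) := by rw [one_mul, div_eq_inv_mul]
      _ ≤ (b / c2) * (uu / a) :=
        mul_le_mul_of_nonneg_right ((one_le_div hc2).mpr hc2b) (div_nonneg huu ha.le)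
      _ = (b / a) * (uu / c2) := by ring

end Aux

/-- **Deterministic sandwich bound from the proof of Lemma diag.** -/
theorem sandwich_bound_quadratic_form {p n : ℕ} (hnp : n ≤ p)
    (S Ssqrt : Matrix (Fin p) (Fin p) ℝ) (hPD : S.PosDef)
    (hsq : Ssqrt * Ssqrt = S) (hsqSymm : Ssqrtᵀ = Ssqrt) (hsqPD : Ssqrt.PosDef)
    (U : Matrix (Fin p) (Fin n) ℝ) (hU : Uᵀ * U = 1)
    (v : Fin p → ℝ) (hv : vnorm v = 1) :
    (lambdaMin S / lambdaMax S) *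
        vnorm (Uᵀ.mulVec ((vnorm (Ssqrt.mulVec v))⁻¹ • Ssqrt.mulVec v)) ^ 2
      ≤ v ⬝ᵥ (Ssqrt * U * (Uᵀ * S * U)⁻¹ * Uᵀ * Ssqrt).mulVec v ∧
    v ⬝ᵥ (Ssqrt * U * (Uᵀ * S * U)⁻¹ * Uᵀ * Ssqrt).mulVec v
      ≤ (lambdaMax S / lambdaMin S) *
          vnorm (Uᵀ.mulVec ((vnorm (Ssqrt.mulVec v))⁻¹ • Ssqrt.mulVec v)) ^ 2 := by
  classical
  have hp : Nonempty (Fin p) := by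
    by_contra h
    rw [not_nonempty_iff] at h
    simp [vnorm, dotProduct] at hv
  set E : Set ℝ := {r : ℝ | ∃ w : Fin p → ℝ, w ≠ 0 ∧ S.mulVec w = r • w} with hEdef
  have hE : E = Set.range hPD.1.eigenvalues := eig_set_eq hPD.1
  have hfin : E.Finite := hE ▸ Set.finite_range _
  have hEne : E.Nonempty := hE ▸ Set.range_nonempty _
  set a : ℝ := lambdaMin S with hadef
  set b : ℝ := lambdaMax S with hbdef
  have haE : a ∈ E := hEne.csInf_mem hfin
  have hbE : b ∈ E := hEne.csSup_mem hfin
  have hEpos : ∀ r ∈ E, 0 < r := by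
    rw [hE]; rintro r ⟨i, rfl⟩; exact hPD.eigenvalues_pos i
  have ha0 : 0 < a := hEpos a haE
  have hb0 : 0 < b := hEpos b hbE
  have hbound : ∀ r : ℝ, (∃ w : Fin p → ℝ, w ≠ 0 ∧ S.mulVec w = r • w) → a ≤ r ∧ r ≤ b :=
    fun r hr => ⟨csInf_le hfin.bddBelow hr, le_csSup hfin.bddAbove hr⟩
  have hS := spec_bound hPD.1 hbound
  have hUU : ∀ y : Fin n → ℝ, Uᵀ *ᵥ (U *ᵥ y) = y := by
    intro y; rw [mulVec_mulVec, hU, one_mulVec]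
  have hUdot : ∀ y : Fin n → ℝ, (U *ᵥ y) ⬝ᵥ (U *ᵥ y) = y ⬝ᵥ y := by
    intro y
    rw [dotProduct_mulVec, ← mulVec_transpose, hUU]
  have hBdot : ∀ y : Fin n → ℝ, y ⬝ᵥ (Uᵀ * S * U) *ᵥ y = (U *ᵥ y) ⬝ᵥ (S *ᵥ (U *ᵥ y)) := by
    intro y
    rw [← mulVec_mulVec, ← mulVec_mulVec, dotProduct_mulVec, vecMul_transpose]
  set B : Matrix (Fin n) (Fin n) ℝ := Uᵀ * S * U with hBdef
  have hSpos : ∀ x : Fin p → ℝ, x ≠ 0 → 0 < x ⬝ᵥ S *ᵥ x := by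
    intro x hx
    have := hPD.dotProduct_mulVec_pos hx
    rwa [star_trivial] at this
  have hUne : ∀ y : Fin n → ℝ, y ≠ 0 → U *ᵥ y ≠ 0 := by
    intro y hy h0
    exact hy (by rw [← hUU y, h0, mulVec_zero])
  have hBherm : B.IsHermitian := by
    have h := isHermitian_conjTranspose_mul_mul U hPD.1
    rwa [conjTranspose_eq_transpose_of_trivial] at h
  have hBpd : B.PosDef := by
    refine PosDef.of_dotProduct_mulVec_pos hBherm fun y hy => ?_
    rw [star_trivial, hBdot y]
    exact hSpos _ (hUne y hy)
  have hBeig : ∀ r : ℝ, (∃ y : Fin n → ℝ, y ≠ 0 ∧ B.mulVec y = r • y) → a ≤ r ∧ r ≤ b := by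
    rintro r ⟨y, hy, hBy⟩
    have hyy : 0 < y ⬝ᵥ y := dot_self_pos hy
    have h1 : y ⬝ᵥ B *ᵥ y = r * (y ⬝ᵥ y) := by rw [hBy, dotProduct_smul, smul_eq_mul]
    have h2 := hS (U *ᵥ y)
    rw [hUdot y, ← hBdot y, h1] at h2
    exact ⟨le_of_mul_le_mul_right h2.1 hyy, le_of_mul_le_mul_right h2.2 hyy⟩
  have hdet : IsUnit B.det := isUnit_iff_ne_zero.mpr hBpd.det_pos.ne'
  have hBinv : B * B⁻¹ = 1 := mul_nonsing_inv B hdet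
  have hBinvherm : (B⁻¹).IsHermitian := hBherm.inv
  have hBinveig : ∀ r : ℝ, (∃ y : Fin n → ℝ, y ≠ 0 ∧ (B⁻¹).mulVec y = r • y) →
      b⁻¹ ≤ r ∧ r ≤ a⁻¹ := by
    rintro r ⟨y, hy, hry⟩
    have hgy : B *ᵥ (r • y) = y := by
      rw [← hry, mulVec_mulVec, hBinv, one_mulVec]
    rw [mulVec_smul] at hgy
    have hr0 : r ≠ 0 := by
      rintro rfl
      rw [zero_smul] at hgy
      exact hy hgy.symm
    have hBy : B *ᵥ y = r⁻¹ • y := by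
      calc B *ᵥ y = r⁻¹ • (r • (B *ᵥ y)) := by
            rw [smul_smul, inv_mul_cancel₀ hr0, one_smul]
        _ = r⁻¹ • y := by rw [hgy]
    have h := hBeig r⁻¹ ⟨y, hy, hBy⟩
    have hrinv : 0 < r⁻¹ := lt_of_lt_of_le ha0 h.1
    refine ⟨?_, ?_⟩
    · have h2 := inv_anti₀ hrinv h.2
      rwa [inv_inv] at h2
    · have h2 := inv_anti₀ ha0 h.1
      rwa [inv_inv] at h2
  set s : Fin p → ℝ := Ssqrt *ᵥ v with hsdef
  set u : Fin n → ℝ := Uᵀ *ᵥ s with hudef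
  set c : ℝ := vnorm s with hcdef
  have hvecS : ∀ z : Fin p → ℝ, v ⬝ᵥ Ssqrt *ᵥ z = s ⬝ᵥ z := by
    intro z
    rw [dotProduct_mulVec]
    congr 1
    rw [← hsqSymm, vecMul_transpose]
  have hQ : v ⬝ᵥ (Ssqrt * U * B⁻¹ * Uᵀ * Ssqrt).mulVec v = u ⬝ᵥ (B⁻¹).mulVec u := by
    rw [← mulVec_mulVec, ← mulVec_mulVec, ← mulVec_mulVec, ← mulVec_mulVec, hvecS,
      dotProduct_mulVec s U, ← mulVec_transpose, ← hudef]
  have hss : s ⬝ᵥ s = v ⬝ᵥ S *ᵥ v := by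
    rw [hsdef]
    rw [dotProduct_mulVec (Ssqrt *ᵥ v) Ssqrt v]
    have h1 : (Ssqrt *ᵥ v) ᵥ* Ssqrt = S *ᵥ v := by
      rw [← hsqSymm, vecMul_transpose, mulVec_mulVec, hsqSymm, hsq]
    rw [h1, dotProduct_comm]
  have hvv : v ⬝ᵥ v = 1 := by
    have h0 := Real.sq_sqrt (dot_self_nonneg v)
    rw [show Real.sqrt (v ⬝ᵥ v) = vnorm v from rfl, hv] at h0
    simpa using h0.symm
  have hc2 : c ^ 2 = s ⬝ᵥ s := by
    rw [hcdef]
    exact Real.sq_sqrt (dot_self_nonneg s)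
  have hac : a ≤ c ^ 2 ∧ c ^ 2 ≤ b := by
    have h := hS v
    rw [hvv, mul_one, mul_one, ← hss, ← hc2] at h
    exact h
  have hT : vnorm (Uᵀ.mulVec (c⁻¹ • s)) ^ 2 = (u ⬝ᵥ u) / c ^ 2 := by
    have h1 : Uᵀ *ᵥ (c⁻¹ • s) = c⁻¹ • u := by rw [mulVec_smul, hudef]
    have hcsq : 0 < c ^ 2 := lt_of_lt_of_le ha0 hac.1
    have hc0 : c ≠ 0 := by
      intro h
      rw [h] at hcsq
      simp at hcsq
    rw [h1, show vnorm (c⁻¹ • u) ^ 2 = (c⁻¹ • u) ⬝ᵥ (c⁻¹ • u) from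
      Real.sq_sqrt (dot_self_nonneg _), smul_dotProduct, dotProduct_smul, smul_eq_mul,
      smul_eq_mul, sq]
    field_simp
  have hBinvQ := spec_bound hBinvherm hBinveig u
  have harith := sandwich_arith ha0 hb0 hac.1 hac.2 (dot_self_nonneg u) hBinvQ.1 hBinvQ.2
  constructor
  · rw [hQ, hT]
    exact harith.1
  · rw [hQ, hT]
    exact harith.2
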